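/- arXiv:1806.08474 — 2 statements merged into one kernel-verified Lean document; each statement's English description precedes it below -/
import Mathlib

section
/- For every positive real constant d and every complex number z, the normalized sum of Gaussian shifts on the grid πℤ equals the third Jacobi theta function: (1/√(πd)) · Σ_{n∈ℤ} exp(−(z − nπ)²/(dπ²)) = ϑ₃(z, iπd). -/
/-- The third Jacobi theta function `ϑ₃(z, τ) = Σ_{n ∈ ℤ} exp(2inz + πin²τ)`. -/
noncomputable def jacobiTheta3 (z τ : ℂ) : ℂ :=
  ∑' n : ℤ, Complex.exp (2 * Complex.I * n * z + Real.pi * Complex.I * n ^ 2 * τ)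

/-- For every `d > 0` and every complex `z`,
`(1/√(πd)) · Σ_{n∈ℤ} exp(−(z − nπ)²/(dπ²)) = ϑ₃(z, iπd)`. -/
theorem gaussian_shift_sum_eq_theta3 (d : ℝ) (hd : 0 < d) (z : ℂ) :
    (1 / Real.sqrt (Real.pi * d) : ℂ) *
      ∑' n : ℤ, Complex.exp (-(z - n * Real.pi) ^ 2 / (d * Real.pi ^ 2)) =
    jacobiTheta3 z (Complex.I * Real.pi * d) := by
  have hπ := Real.pi_pos
  have ha : (0:ℝ) < ((Real.pi * d : ℂ)).re := by
    simp [← Complex.ofReal_mul]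
    positivity
  have key := Complex.tsum_exp_neg_quadratic (a := ((Real.pi * d : ℝ) : ℂ))
    (by simpa using ha) (Complex.I * z / Real.pi)
  have hπ0 : (Real.pi : ℂ) ≠ 0 := by exact_mod_cast hπ.ne'
  have hd0 : (d : ℂ) ≠ 0 := by exact_mod_cast hd.ne'
  have hsqrt : ((Real.pi * d : ℝ) : ℂ) ^ (1/2 : ℂ) = (Real.sqrt (Real.pi * d) : ℂ) := by
    rw [Real.sqrt_eq_rpow, Complex.ofReal_cpow (by positivity)]
    norm_num
  rw [hsqrt] at key
  have h1 : ∀ n : ℤ, Complex.exp (-Real.pi * ((Real.pi * d : ℝ) : ℂ) * n ^ 2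
      + 2 * Real.pi * (Complex.I * z / Real.pi) * n)
      = Complex.exp (2 * Complex.I * n * z + Real.pi * Complex.I * n ^ 2
        * (Complex.I * Real.pi * d)) := by
    intro n
    congr 1
    push_cast
    field_simp
    linear_combination (-(Real.pi:ℂ)^2 * d * (n:ℂ)^2) * Complex.I_sq
  have h2 : ∀ n : ℤ, Complex.exp (-Real.pi / ((Real.pi * d : ℝ) : ℂ)
      * (n + Complex.I * (Complex.I * z / Real.pi)) ^ 2)
      = Complex.exp (-(z - n * Real.pi) ^ 2 / (d * Real.pi ^ 2)) := by
    intro n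
    congr 1
    push_cast
    field_simp
    linear_combination (-(z^2) * (Complex.I^2 - 1)
      - 2*(Real.pi:ℂ) * (n:ℂ) * z) * Complex.I_sq
  simp only [h1, h2] at key
  rw [jacobiTheta3, ← key]
end

section
/- For every positive real constant d and every real number x, the deviation of the third Jacobi theta function from 1 satisfies |ϑ₃(πx, iπd) − 1| < csch(π²d), where csch denotes the hyperbolic cosecant. -/
/-- The hyperbolic cosecant `csch(a) = 2/(e^a − e^{−a})`. -/
noncomputable def csch (a : ℝ) : ℝ := 2 / (Real.exp a - Real.exp (-a))

/-- For every `d > 0` and every real `x`, `|ϑ₃(πx, iπd) − 1| < csch(π²d)`. -/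
theorem theta3_sub_one_abs_lt_csch (d : ℝ) (hd : 0 < d) (x : ℝ) :
    ‖jacobiTheta3 (Real.pi * x) (Complex.I * Real.pi * d) - 1‖ <
      csch (Real.pi ^ 2 * d) := by
  have hπ := Real.pi_pos
  set a : ℝ := Real.pi ^ 2 * d with ha_def
  have ha : 0 < a := by positivity
  set τ : ℂ := Complex.I * Real.pi * d with hτ_def
  have hτim : τ.im = Real.pi * d := by simp [hτ_def]
  set f : ℤ → ℂ := fun n => jacobiTheta₂_term n x τ with hf_def
  -- identify the sum
  have hsum_eq : jacobiTheta3 (Real.pi * x) τ = ∑' n : ℤ, f n := by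
    unfold jacobiTheta3
    refine tsum_congr fun n => ?_
    simp only [hf_def, jacobiTheta₂_term]
    ring_nf
  have hf : Summable f := by
    rw [hf_def]
    refine (summable_jacobiTheta₂_term_iff x τ).2 ?_
    rw [hτim]; positivity
  have hf0 : f 0 = 1 := by
    simp [hf_def, jacobiTheta₂_term]
  -- the norm of each term
  have hnorm : ∀ n : ℤ, ‖f n‖ = Real.exp (-a * (n : ℝ) ^ 2) := by
    intro n
    rw [hf_def, norm_jacobiTheta₂_term, hτim]
    norm_num
    ring_nf
    rw [ha_def]; ring
  -- subtract the n = 0 term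
  have hsub : jacobiTheta3 (Real.pi * x) τ - 1
      = ∑' n : ℤ, (if n = 0 then 0 else f n) := by
    rw [hsum_eq, Summable.tsum_eq_add_tsum_ite hf 0, hf0]
    ring
  set G : ℤ → ℝ := fun n => if n = 0 then 0 else Real.exp (-a * (n : ℝ) ^ 2) with hG_def
  set H : ℤ → ℝ := fun n => if n = 0 then 0 else Real.exp (-a * (2 * |(n : ℝ)| - 1)) with hH_def
  have hG_nonneg : ∀ n, 0 ≤ G n := by
    intro n
    simp only [hG_def]
    split <;> positivity
  have hGH : ∀ n, G n ≤ H n := by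
    intro n
    simp only [hG_def, hH_def]
    split
    · rfl
    · rw [Real.exp_le_exp]
      nlinarith [sq_nonneg (|(n : ℝ)| - 1), sq_abs (n : ℝ), ha]
  -- closed form for the sum of H
  have hHsum : HasSum H (csch a) := by
    set q : ℝ := Real.exp (-(2 * a)) with hq_def
    have hq0 : 0 ≤ q := le_of_lt (Real.exp_pos _)
    have hq1 : q < 1 := by
      rw [hq_def, Real.exp_lt_one_iff]; linarith
    set S : ℝ := Real.exp (-a) * (1 - q)⁻¹ with hS_def
    have hgeo : HasSum (fun n : ℕ => Real.exp (-a) * q ^ n) S :=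
      (hasSum_geometric_of_lt_one hq0 hq1).mul_left _
    have hshift : ∀ n : ℕ, H (n + 1 : ℕ) = Real.exp (-a) * q ^ n := by
      intro n
      simp only [hH_def]
      rw [if_neg (by exact_mod_cast Nat.succ_ne_zero n)]
      rw [hq_def, ← Real.exp_nat_mul, ← Real.exp_add]
      congr 1
      push_cast
      rw [abs_of_nonneg (by positivity)]
      ring
    have hpos : HasSum (fun n : ℕ => H n) S := by
      refine (hasSum_nat_add_iff' (f := fun n : ℕ => H n) (g := S) 1).1 ?_
      rw [Finset.range_one, Finset.sum_singleton]
      have h0 : H ((0 : ℕ) : ℤ) = 0 := by simp [hH_def]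
      show HasSum (fun n : ℕ => H ((n + 1 : ℕ) : ℤ)) (S - H ((0 : ℕ) : ℤ))
      rw [h0, sub_zero, funext hshift]
      exact hgeo
    have hneg : HasSum (fun n : ℕ => H (-(n + 1))) S := by
      have h2 : ∀ n : ℕ, H (-(n + 1)) = Real.exp (-a) * q ^ n := by
        intro n
        rw [← hshift n]
        simp only [hH_def]
        rw [if_neg (by omega), if_neg (by exact_mod_cast Nat.succ_ne_zero n)]
        rw [show ((-(↑n + 1) : ℤ) : ℝ) = -((n : ℝ) + 1) by push_cast; ring]
        rw [show (((n + 1 : ℕ) : ℤ) : ℝ) = ((n : ℝ) + 1) by push_cast; ring]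
        rw [abs_neg]
      rw [funext h2]
      exact hgeo
    have htot : HasSum H (S + S) := hpos.of_nat_of_neg_add_one hneg
    have hSS : S + S = csch a := by
      rw [hS_def, hq_def, csch]
      have h1 : (0:ℝ) < 1 - Real.exp (-(2 * a)) := by
        have : Real.exp (-(2 * a)) < 1 := by rw [Real.exp_lt_one_iff]; linarith
        linarith
      have h2 : (0:ℝ) < Real.exp a - Real.exp (-a) := by
        have : Real.exp (-a) < Real.exp a := Real.exp_lt_exp.2 (by linarith)
        linarith
      have hea : Real.exp (-(2*a)) = Real.exp (-a) * Real.exp (-a) := by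
        rw [← Real.exp_add]; ring_nf
      have heb : Real.exp a * Real.exp (-a) = 1 := by
        rw [← Real.exp_add]; simp
      have h3 : 1 - Real.exp (-a) * Real.exp (-a) = Real.exp (-a) * (Real.exp a - Real.exp (-a)) := by
        linear_combination -heb
      rw [hea, h3, mul_inv, ← mul_assoc, mul_inv_cancel₀ (Real.exp_pos _).ne', one_mul]
      ring
    rwa [hSS] at htot
  have hHsummable : Summable H := hHsum.summable
  have hGsummable : Summable G := Summable.of_nonneg_of_le hG_nonneg hGH hHsummable
  -- strict inequality at n = 2
  have hstrict : G 2 < H 2 := by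
    simp only [hG_def, hH_def]
    rw [if_neg (by norm_num), if_neg (by norm_num)]
    rw [Real.exp_lt_exp]
    norm_num
    nlinarith
  have hGH_lt : ∑' n, G n < ∑' n, H n := Summable.tsum_lt_tsum hGH hstrict hGsummable hHsummable
  -- put it together
  rw [hsub]
  calc ‖∑' n : ℤ, (if n = 0 then 0 else f n)‖
      ≤ ∑' n : ℤ, G n := by
        refine norm_tsum_le_tsum_norm ?_ |>.trans_eq (tsum_congr fun n => ?_)
        · refine hGsummable.congr fun n => ?_
          simp only [hG_def]
          split <;> simp [hnorm, *, -hf_def, -ha_def]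
        · simp only [hG_def]
          split <;> simp [hnorm, *, -hf_def, -ha_def]
    _ < ∑' n, H n := hGH_lt
    _ = csch a := hHsum.tsum_eq
end
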